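/- Let κ be a regular uncountable cardinal and suppose ω ≤ χ ≤ θ, where θ is regular and θ < κ. If there exists a stationary Σ ⊆ E^κ_{≥χ} and a Σ-closed coloring c : [κ]² → θ witnessing U(κ, 2, θ, χ), then χ(κ) ≥ χ. -/

import Mathlib

noncomputable section

open Set

namespace CSeq

/-- `#s = c`, phrased with a universe lift (sets of ordinals live in `Type 1`). -/
def MkEq {α : Type 1} (s : Set α) (c : Cardinal.{0}) : Prop :=
  Cardinal.mk s = Cardinal.lift.{1} c

def MkLe {α : Type 1} (s : Set α) (c : Cardinal.{0}) : Prop :=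
  Cardinal.mk s ≤ Cardinal.lift.{1} c

def MkLt {α : Type 1} (s : Set α) (c : Cardinal.{0}) : Prop :=
  Cardinal.mk s < Cardinal.lift.{1} c

/-- The strict supremum `ssup(a)` of a set of ordinals. -/
def ssup (a : Set Ordinal.{0}) : Ordinal.{0} := sSup ((· + 1) '' a)

/-- `acc⁺(a) = {α < ssup a | sup (a ∩ α) = α > 0}`. -/
def accPlus (a : Set Ordinal.{0}) : Set Ordinal.{0} :=
  {α | α < ssup a ∧ 0 < α ∧ sSup (a ∩ Iio α) = α}

/-- `acc(a) = a ∩ acc⁺(a)`. -/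
def acc (a : Set Ordinal.{0}) : Set Ordinal.{0} := a ∩ accPlus a

/-- A set of ordinals is closed below `β`. -/
def IsClosedIn (C : Set Ordinal.{0}) (β : Ordinal.{0}) : Prop :=
  ∀ α, α < β → 0 < α → sSup (C ∩ Iio α) = α → α ∈ C

/-- A club (closed and unbounded set) in `β`. -/
def IsClubIn (C : Set Ordinal.{0}) (β : Ordinal.{0}) : Prop :=
  C ⊆ Iio β ∧ (∀ α < β, ∃ γ ∈ C, α ≤ γ) ∧ IsClosedIn C β

/-- A stationary subset of `β`: one meeting every club in `β`. -/
def IsStationaryIn (S : Set Ordinal.{0}) (β : Ordinal.{0}) : Prop :=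
  ∀ C, IsClubIn C β → (S ∩ C).Nonempty

/-- A C-sequence over a set `Γ` of ordinals. -/
def IsCSeqOn (Γ : Set Ordinal.{0}) (C : Ordinal.{0} → Set Ordinal.{0}) : Prop :=
  ∀ β ∈ Γ, C β ⊆ Iio β ∧ IsClosedIn (C β) β ∧ sSup (C β) = sSup (Iio β)

/-- A C-sequence over `κ`. -/
def IsCSeq (κ : Ordinal.{0}) (C : Ordinal.{0} → Set Ordinal.{0}) : Prop :=
  IsCSeqOn (Iio κ) C

/-- The covering relation underlying the C-sequence number: there are `Δ ∈ [κ]^κ` and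
`b : κ → [Γ]^χ` with `Δ ∩ α ⊆ ⋃_{β ∈ b α} C β` for all `α < κ`. -/
def CSeqCovers (κ : Cardinal.{0}) (Γ : Set Ordinal.{0})
    (C : Ordinal.{0} → Set Ordinal.{0}) (χ : Cardinal.{0}) : Prop :=
  ∃ (Δ : Set Ordinal.{0}) (b : Ordinal.{0} → Set Ordinal.{0}),
    Δ ⊆ Iio κ.ord ∧ MkEq Δ κ ∧
    (∀ α < κ.ord, b α ⊆ Γ ∧ MkEq (b α) χ) ∧
    ∀ α < κ.ord, Δ ∩ Iio α ⊆ ⋃ β ∈ b α, C β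

/-- `χ(vec C)` for a C-sequence over `Γ ⊆ κ`. -/
def chiOfOn (κ : Cardinal.{0}) (Γ : Set Ordinal.{0})
    (C : Ordinal.{0} → Set Ordinal.{0}) : Cardinal.{0} :=
  sInf {χ : Cardinal.{0} | χ ≤ κ ∧ CSeqCovers κ Γ C χ}

/-- `χ(vec C)` for a C-sequence over `κ`. -/
def chiOf (κ : Cardinal.{0}) (C : Ordinal.{0} → Set Ordinal.{0}) : Cardinal.{0} :=
  chiOfOn κ (Iio κ.ord) C

/-- The C-sequence number `χ(κ)`. -/
def chiNum (κ : Cardinal.{0}) : Cardinal.{0} :=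
  sInf {χ : Cardinal.{0} | χ ≤ κ ∧ ∀ C, IsCSeq κ.ord C → CSeqCovers κ (Iio κ.ord) C χ}

/-- The C-sequence spectrum of `κ`: the infinite values of `χ(vec C)`. -/
def spec (κ : Cardinal.{0}) : Set Cardinal.{0} :=
  {χ | Cardinal.aleph0 ≤ χ ∧ ∃ C, IsCSeq κ.ord C ∧ chiOf κ C = χ}

/-- `sup (reg κ)`, the supremum of the infinite regular cardinals below `κ`. -/
def supReg (κ : Cardinal.{0}) : Cardinal.{0} :=
  sSup {ν : Cardinal.{0} | ν.IsRegular ∧ ν < κ}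

/-- `acc(κ)`: the set of nonzero limit ordinals below `κ`. -/
def accOrd (κ : Ordinal.{0}) : Set Ordinal.{0} := {β | β < κ ∧ Order.IsSuccLimit β}

/-- `Tr(S)`: the set of `β < κ` of uncountable cofinality in which `S` reflects. -/
def TrSet (κ : Ordinal.{0}) (S : Set Ordinal.{0}) : Set Ordinal.{0} :=
  {β | β < κ ∧ Cardinal.aleph0 < β.cof ∧ IsStationaryIn (S ∩ Iio β) β}

/-- The order type of a set of ordinals (as an ordinal one universe up). -/
def otp (s : Set Ordinal.{0}) : Ordinal.{1} :=
  Ordinal.type (Subrel ((· < ·) : Ordinal.{0} → Ordinal.{0} → Prop) (· ∈ s))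

/-- `D^c_{≤ i}(β) = {α < β | c(α, β) ≤ i}`. -/
def DleI (c : Ordinal.{0} → Ordinal.{0} → Ordinal.{0}) (i β : Ordinal.{0}) :
    Set Ordinal.{0} :=
  {α | α < β ∧ c α β ≤ i}

/-- The coloring `c` takes pairs from `κ` to colors `< θ`. -/
def ColoringInto (κ θ : Ordinal.{0}) (c : Ordinal.{0} → Ordinal.{0} → Ordinal.{0}) : Prop :=
  ∀ α β, α < β → β < κ → c α β < θ

/-- `S`-closedness of a coloring. -/
def IsClosedColoringOn (S : Set Ordinal.{0}) (κ θ : Ordinal.{0})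
    (c : Ordinal.{0} → Ordinal.{0} → Ordinal.{0}) : Prop :=
  ∀ β < κ, ∀ i < θ, ∀ α ∈ S, α < β → 0 < α →
    sSup (DleI c i β ∩ Iio α) = α → α ∈ DleI c i β

/-- Closedness of a coloring. -/
def IsClosedColoring (κ θ : Ordinal.{0})
    (c : Ordinal.{0} → Ordinal.{0} → Ordinal.{0}) : Prop :=
  ∀ β < κ, ∀ i < θ, ∀ α, α < β → 0 < α →
    sSup (DleI c i β ∩ Iio α) = α → α ∈ DleI c i β

/-- `c` witnesses `U(κ, μ, θ, χ)`. -/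
def WitnessU (κ μ θ χ : Cardinal.{0})
    (c : Ordinal.{0} → Ordinal.{0} → Ordinal.{0}) : Prop :=
  ∀ χ' : Cardinal.{0}, χ' < χ →
    ∀ 𝒜 : Set (Set Ordinal.{0}),
      (∀ a ∈ 𝒜, a ⊆ Iio κ.ord ∧ MkEq a χ') → MkEq 𝒜 κ → 𝒜.Pairwise Disjoint →
    ∀ i, i < θ.ord →
      ∃ ℬ ⊆ 𝒜, MkEq ℬ μ ∧
        ∀ a ∈ ℬ, ∀ b ∈ ℬ, (∀ α ∈ a, ∀ β ∈ b, α < β) →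
          ∀ α ∈ a, ∀ β ∈ b, i < c α β

/-- An ultrafilter over a set `X` of ordinals, presented as a family of subsets of `X`. -/
structure IsUltrafilterOn (X : Set Ordinal.{0}) (U : Set (Set Ordinal.{0})) : Prop where
  mem_subset : ∀ A ∈ U, A ⊆ X
  univ_mem : X ∈ U
  empty_notMem : ∅ ∉ U
  mem_of_superset : ∀ A ∈ U, ∀ B, B ⊆ X → A ⊆ B → B ∈ U
  inter_mem : ∀ A ∈ U, ∀ B ∈ U, A ∩ B ∈ U
  mem_or_compl_mem : ∀ A, A ⊆ X → A ∈ U ∨ X \ A ∈ U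

/-- `δ`-completeness of an ultrafilter over `X`. -/
def IsComplete (δ : Cardinal.{0}) (X : Set Ordinal.{0})
    (U : Set (Set Ordinal.{0})) : Prop :=
  ∀ s : Set (Set Ordinal.{0}), s ⊆ U → MkLt s δ → X ∩ ⋂₀ s ∈ U

/-- Uniformity of an ultrafilter over `X`: all members have full cardinality. -/
def IsUniform (X : Set Ordinal.{0}) (U : Set (Set Ordinal.{0})) : Prop :=
  ∀ A ∈ U, Cardinal.mk A = Cardinal.mk X

/-- Weak normality of an ultrafilter over a set of nonzero ordinals below `κ`. -/
def IsWeaklyNormal (κ : Ordinal.{0}) (X : Set Ordinal.{0})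
    (U : Set (Set Ordinal.{0})) : Prop :=
  ∀ X' ∈ U, ∀ g : Ordinal.{0} → Ordinal.{0}, (∀ β ∈ X', g β < β) →
    ∃ γ < κ, {β ∈ X' | g β < γ} ∈ U

/-- A `□(κ,<ω)`-sequence. -/
def IsSquareSeqLtOmega (κ : Ordinal.{0})
    (𝒞 : Ordinal.{0} → Set (Set Ordinal.{0})) : Prop :=
  (∀ α, α < κ → Order.IsSuccLimit α →
      (𝒞 α).Finite ∧ (𝒞 α).Nonempty ∧ ∀ C ∈ 𝒞 α, IsClubIn C α) ∧
  (∀ α, α < κ → Order.IsSuccLimit α → ∀ C ∈ 𝒞 α, ∀ β ∈ acc C, C ∩ Iio β ∈ 𝒞 β) ∧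
  ¬ ∃ D : Set Ordinal.{0}, IsClubIn D κ ∧ ∀ α ∈ acc D, D ∩ Iio α ∈ 𝒞 α

/-- A weakly inaccessible cardinal: a regular limit cardinal. -/
def IsWInaccessible (c : Cardinal.{0}) : Prop :=
  c.IsRegular ∧ Order.IsSuccLimit c

/-- The Mahlo hierarchy (finite levels): `0`-Mahlo means weakly inaccessible, and
`(n+1)`-Mahlo means regular with stationarily many `n`-Mahlo cardinals below. -/
def IsNMahlo : ℕ → Cardinal.{0} → Prop
  | 0 => fun c => IsWInaccessible c
  | (n + 1) => fun c => c.IsRegular ∧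
      IsStationaryIn {α : Ordinal.{0} | ∃ μ : Cardinal.{0}, μ.ord = α ∧ IsNMahlo n μ} c.ord

/-- A set of ordinals is bounded below `α`. -/
def BoundedIn (s : Set Ordinal.{0}) (α : Ordinal.{0}) : Prop :=
  s = ∅ ∨ ∃ ε < α, ∀ η ∈ s, η ≤ ε

/-- The covering property for a coloring `c : [κ]² → θ`. -/
def HasCoveringProperty (κ θ : Cardinal.{0})
    (c : Ordinal.{0} → Ordinal.{0} → Ordinal.{0}) : Prop :=
  ∀ α < κ.ord, ∃ f : Ordinal.{0} → Ordinal.{0},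
    Set.InjOn f (Iio θ.ord) ∧
    (∀ i < θ.ord, α < f i ∧ f i < κ.ord ∧ Order.IsSuccLimit (f i) ∧ (f i).cof ≠ θ) ∧
    BoundedIn (Iio α \ ⋃ i ∈ Iio θ.ord, DleI c i (f i)) α


open Cardinal in
theorem aux_smallSup {s : Set Ordinal.{0}} {o : Ordinal.{0}} (hsub : s ⊆ Iio o)
    (hc : Cardinal.mk s < Cardinal.lift.{1} o.cof) : sSup s < o := by
  have ho : o ≠ 0 := by
    rintro rfl
    rw [Ordinal.cof_zero] at hc
    simp at hc
  rcases s.eq_empty_or_nonempty with rfl | hne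
  · rw [csSup_empty]
    exact pos_iff_ne_zero.2 ho
  · obtain ⟨c0, hc0lt, hc0⟩ := Cardinal.lt_lift_iff.1 hc
    have hmk : Cardinal.mk (ULift.{1} c0.out) = Cardinal.mk s := by
      rw [Cardinal.mk_uLift, Cardinal.mk_out, hc0]
    obtain ⟨e⟩ := Cardinal.eq.1 hmk
    have hne' : Nonempty c0.out := by
      rcases hne with ⟨x, hx⟩
      exact ⟨(e.symm ⟨x, hx⟩).down⟩
    have hco : Cardinal.mk c0.out < o.cof := by rwa [Cardinal.mk_out]
    set f : c0.out → Ordinal.{0} := fun i => ((e ⟨i⟩ : s) : Ordinal) with hf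
    have hrange : Set.range f = s := by
      ext x
      constructor
      · rintro ⟨i, rfl⟩
        exact (e ⟨i⟩).2
      · intro hx
        refine ⟨(e.symm ⟨x, hx⟩).down, ?_⟩
        show ((e ⟨(e.symm ⟨x, hx⟩).down⟩ : s) : Ordinal) = x
        rw [show (⟨(e.symm ⟨x, hx⟩).down⟩ : ULift.{1} c0.out) = e.symm ⟨x, hx⟩ from rfl,
          e.apply_symm_apply]
    have : iSup f < o := Ordinal.iSup_lt_ord hco (fun i => hsub (by exact (e ⟨i⟩).2))
    calc sSup s = sSup (Set.range f) := by rw [hrange]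
    _ < o := this



theorem aux_bdd {s : Set Ordinal.{0}} {o : Ordinal.{0}} (h : s ⊆ Iio o) : BddAbove s :=
  ⟨o, fun x hx => (h hx).le⟩

theorem aux_sSup_le {s : Set Ordinal.{0}} {o : Ordinal.{0}} (h : s ⊆ Iio o) : sSup s ≤ o :=
  csSup_le' (fun x hx => (h hx).le)

theorem aux_le_sSup {s : Set Ordinal.{0}} {o x : Ordinal.{0}} (h : s ⊆ Iio o) (hx : x ∈ s) :
    x ≤ sSup s := le_csSup (aux_bdd h) hx

theorem aux_exists_gt {s : Set Ordinal.{0}} {z : Ordinal.{0}} (h : z < sSup s) :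
    ∃ x ∈ s, z < x := by
  by_contra hcon
  push_neg at hcon
  exact absurd (csSup_le' (fun x hx => hcon x hx)) (not_le.2 h)

theorem aux_supReach {s : Set Ordinal.{0}} {δ : Ordinal.{0}} (h1 : s ⊆ Iio δ)
    (h2 : ∀ z < δ, ∃ x ∈ s, z < x) : sSup s = δ := by
  refine le_antisymm (aux_sSup_le h1) ?_
  by_contra hcon
  push_neg at hcon
  obtain ⟨x, hxs, hx⟩ := h2 _ hcon
  exact absurd (aux_le_sSup h1 hxs) (not_le.2 hx)

theorem aux_sSup_Iio_limit {β : Ordinal.{0}} (h : Order.IsSuccLimit β) : sSup (Iio β) = β :=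
  aux_supReach (fun _ hx => hx) (fun z hz => ⟨z + 1, h.succ_lt hz, Order.lt_add_one_iff.2 le_rfl⟩)

theorem aux_sSup_Iio_succ (γ : Ordinal.{0}) : sSup (Iio (γ + 1)) = γ := by
  refine le_antisymm (csSup_le' (fun x hx => Order.lt_add_one_iff.1 hx)) ?_
  exact le_csSup (aux_bdd (fun x hx => hx)) (Set.mem_Iio.2 (Order.lt_add_one_iff.2 le_rfl))

/-- unboundedness from cardinality -/
theorem aux_unbounded {s : Set Ordinal.{0}} {κ : Cardinal.{0}} (hκ : Cardinal.aleph0 ≤ κ)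
    (hcard : Cardinal.lift.{1} κ ≤ Cardinal.mk s) {z : Ordinal.{0}} (hz : z < κ.ord) :
    ∃ x ∈ s, z < x := by
  by_contra hcon
  push_neg at hcon
  have h1 : s ⊆ Iio (z + 1) := fun x hx => Order.lt_add_one_iff.2 (hcon x hx)
  have h2 : Cardinal.mk s ≤ Cardinal.mk (Iio (z + 1)) := Cardinal.mk_le_mk_of_subset h1
  rw [Ordinal.mk_Iio_ordinal] at h2
  have h3 : (z + 1).card < κ := Cardinal.lt_ord.1 ((Cardinal.isSuccLimit_ord hκ).succ_lt hz)
  have h4 : Cardinal.mk s < Cardinal.lift.{1} κ := lt_of_le_of_lt h2 (Cardinal.lift_lt.2 h3)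
  exact absurd hcard (not_le.2 h4)


def DltI (c : Ordinal.{0} → Ordinal.{0} → Ordinal.{0}) (i β : Ordinal.{0}) : Set Ordinal.{0} :=
  {α | α < β ∧ c α β < i}

def stair (c : Ordinal.{0} → Ordinal.{0} → Ordinal.{0}) (θo β : Ordinal.{0}) : Set Ordinal.{0} :=
  {x | ∃ i, i < θo ∧ x ∈ DleI c i β ∧ sSup (DltI c i β) ≤ x}

def tIdx (c : Ordinal.{0} → Ordinal.{0} → Ordinal.{0}) (θo β t : Ordinal.{0}) : Ordinal.{0} :=
  sInf {i | i < θo ∧ t ≤ sSup (DleI c i β)}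

def clIn (H : Set Ordinal.{0}) (β : Ordinal.{0}) : Set Ordinal.{0} :=
  H ∪ {α | α < β ∧ 0 < α ∧ sSup (H ∩ Iio α) = α}

open scoped Classical in
def myC (c : Ordinal.{0} → Ordinal.{0} → Ordinal.{0}) (θo : Ordinal.{0}) :
    Ordinal.{0} → Set Ordinal.{0} :=
  fun β => if Order.IsSuccLimit β then clIn (stair c θo β) β else {x | x + 1 = β}

theorem DleI_subset {c i β} : DleI c i β ⊆ Iio β := fun _ hx => hx.1
theorem DltI_subset {c i β} : DltI c i β ⊆ Iio β := fun _ hx => hx.1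
theorem stair_subset {c θo β} : stair c θo β ⊆ Iio β := by
  rintro x ⟨i, _, hx, _⟩; exact hx.1

theorem clIn_subset {H : Set Ordinal.{0}} {β} (hH : H ⊆ Iio β) : clIn H β ⊆ Iio β := by
  rintro x (hx | hx)
  · exact hH hx
  · exact hx.1

theorem clIn_sup_transfer {H : Set Ordinal.{0}} {β α : Ordinal.{0}}
    (h0 : 0 < α) (hsup : sSup (clIn H β ∩ Iio α) = α) : sSup (H ∩ Iio α) = α := by
  have hub : ∀ x ∈ clIn H β ∩ Iio α, x ≤ sSup (H ∩ Iio α) := by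
    rintro x ⟨hx | hx, hxα⟩
    · exact aux_le_sSup (fun y hy => hy.2) ⟨hx, hxα⟩
    · obtain ⟨_, hx0, hxsup⟩ := hx
      have hne : (H ∩ Iio x).Nonempty := by
        rcases (H ∩ Iio x).eq_empty_or_nonempty with h | h
        · rw [h, csSup_empty] at hxsup
          exact absurd hxsup.symm (ne_of_gt hx0)
        · exact h
      calc x = sSup (H ∩ Iio x) := hxsup.symm
        _ ≤ sSup (H ∩ Iio α) := csSup_le_csSup (aux_bdd (fun y hy => hy.2)) hne
            (fun y hy => ⟨hy.1, Set.mem_Iio.2 (lt_trans hy.2 hxα)⟩)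
  have hne2 : (clIn H β ∩ Iio α).Nonempty := by
    rcases (clIn H β ∩ Iio α).eq_empty_or_nonempty with h | h
    · rw [h, csSup_empty] at hsup
      exact absurd hsup.symm (ne_of_gt h0)
    · exact h
  refine le_antisymm (csSup_le' (fun y hy => hy.2.le)) ?_
  calc α = sSup (clIn H β ∩ Iio α) := hsup.symm
    _ ≤ sSup (H ∩ Iio α) := csSup_le hne2 hub

theorem clIn_closed {H : Set Ordinal.{0}} {β} : IsClosedIn (clIn H β) β :=
  fun α hαβ h0 hsup => Or.inr ⟨hαβ, h0, clIn_sup_transfer h0 hsup⟩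

theorem stair_cofinal {c : Ordinal.{0} → Ordinal.{0} → Ordinal.{0}} {θo κo β : Ordinal.{0}} (hc : ColoringInto κo θo c) (hβ : Order.IsSuccLimit β) (hβκ : β < κo) :
    ∀ z < β, ∃ x ∈ stair c θo β, z < x := by
  intro z hz
  have hz1 : z + 1 < β := hβ.succ_lt hz
  set I : Set Ordinal.{0} := {i | i < θo ∧ z < sSup (DleI c i β)} with hI
  have hIne : I.Nonempty := by
    refine ⟨c (z + 1) β, hc _ _ hz1 hβκ, ?_⟩
    exact lt_of_lt_of_le (lt_add_one z) (aux_le_sSup DleI_subset ⟨hz1, le_rfl⟩)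
  have hi₁ : sInf I ∈ I := csInf_mem hIne
  obtain ⟨x, hxD, hzx⟩ := aux_exists_gt hi₁.2
  have hσ : sSup (DltI c (sInf I) β) ≤ z := by
    refine csSup_le' ?_
    rintro y ⟨hyβ, hyc⟩
    have hjI : c y β ∉ I := fun hjI =>
      absurd (csInf_le (OrderBot.bddBelow _) hjI) (not_le.2 hyc)
    rw [hI, Set.mem_setOf_eq, not_and] at hjI
    have := hjI (hc _ _ hyβ hβκ)
    push_neg at this
    exact le_trans (aux_le_sSup DleI_subset ⟨hyβ, le_rfl⟩) this
  exact ⟨x, ⟨sInf I, hi₁.1, hxD, le_trans hσ hzx.le⟩, hzx⟩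

theorem tIdx_mem {c : Ordinal.{0} → Ordinal.{0} → Ordinal.{0}} {θo κo β t : Ordinal.{0}} (hc : ColoringInto κo θo c) (ht : t < β) (hβ : β < κo) :
    tIdx c θo β t < θo ∧ t ≤ sSup (DleI c (tIdx c θo β t) β) := by
  have hne : {i : Ordinal.{0} | i < θo ∧ t ≤ sSup (DleI c i β)}.Nonempty :=
    ⟨c t β, hc _ _ ht hβ, aux_le_sSup DleI_subset ⟨ht, le_rfl⟩⟩
  exact csInf_mem hne

theorem tIdx_mono {c : Ordinal.{0} → Ordinal.{0} → Ordinal.{0}} {θo κo β t t' : Ordinal.{0}} (hc : ColoringInto κo θo c) (h : t ≤ t') (ht' : t' < β)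
    (hβ : β < κo) : tIdx c θo β t ≤ tIdx c θo β t' := by
  refine csInf_le_csInf (OrderBot.bddBelow _) ?_ ?_
  · exact ⟨c t' β, hc _ _ ht' hβ, aux_le_sSup DleI_subset ⟨ht', le_rfl⟩⟩
  · rintro i ⟨hiθ, hsup⟩
    exact ⟨hiθ, le_trans h hsup⟩

theorem aux_key {Sta : Set Ordinal.{0}} {c : Ordinal.{0} → Ordinal.{0} → Ordinal.{0}} {θo κo β δ : Ordinal.{0}}
    (hc : ColoringInto κo θo c) (hclosed : IsClosedColoringOn Sta κo θo c)
    (hβκ : β < κo) (hδSta : δ ∈ Sta) (h0 : 0 < δ) (hδβ : δ < β)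
    (hsup : sSup (stair c θo β ∩ Iio δ) = δ) : c δ β ≤ tIdx c θo β δ := by
  obtain ⟨hi₀θ, hi₀sup⟩ := tIdx_mem (t := δ) hc hδβ hβκ
  set i₀ := tIdx c θo β δ with hi₀
  have hsub : stair c θo β ∩ Iio δ ⊆ DleI c i₀ β := by
    rintro x ⟨⟨i, hiθ, ⟨hxβ, hxc⟩, hσx⟩, hxδ⟩
    rcases le_or_gt i i₀ with h | h
    · exact ⟨hxβ, le_trans hxc h⟩
    · exfalso
      have hDne : (DleI c i₀ β).Nonempty := by
        rcases (DleI c i₀ β).eq_empty_or_nonempty with he | he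
        · rw [he, csSup_empty] at hi₀sup
          exact absurd hi₀sup (not_le.2 h0)
        · exact he
      have hsub2 : DleI c i₀ β ⊆ DltI c i β := fun y hy => ⟨hy.1, lt_of_le_of_lt hy.2 h⟩
      have hδσ : δ ≤ sSup (DltI c i β) :=
        le_trans hi₀sup (csSup_le_csSup (aux_bdd DltI_subset) hDne hsub2)
      exact absurd (lt_of_le_of_lt (le_trans hδσ hσx) hxδ) (lt_irrefl δ)
  have hstane : (stair c θo β ∩ Iio δ).Nonempty := by
    rcases (stair c θo β ∩ Iio δ).eq_empty_or_nonempty with he | he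
    · rw [he, csSup_empty] at hsup
      exact absurd hsup.symm (ne_of_gt h0)
    · exact he
  have hsup2 : sSup (DleI c i₀ β ∩ Iio δ) = δ := by
    refine le_antisymm (csSup_le' (fun y hy => hy.2.le)) ?_
    calc δ = sSup (stair c θo β ∩ Iio δ) := hsup.symm
      _ ≤ sSup (DleI c i₀ β ∩ Iio δ) := csSup_le_csSup (aux_bdd (fun y hy => hy.2)) hstane
          (fun x hx => ⟨hsub hx, hx.2⟩)
  exact (hclosed β hβκ i₀ hi₀θ δ hδSta hδβ h0 hsup2).2

theorem myC_isCSeq {c : Ordinal.{0} → Ordinal.{0} → Ordinal.{0}} {θo κo : Ordinal.{0}} (hc : ColoringInto κo θo c) : IsCSeq κo (myC c θo) := by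
  intro β hβ
  rcases Ordinal.zero_or_succ_or_isSuccLimit β with rfl | ⟨γ, rfl⟩ | hlim
  · have hne : ¬ Order.IsSuccLimit (0 : Ordinal.{0}) := Ordinal.not_isSuccLimit_zero
    have hset : myC c θo 0 = ∅ := by
      rw [myC, if_neg hne]
      ext x
      simp only [Set.mem_setOf_eq, Set.mem_empty_iff_false, iff_false]
      intro hx
      exact Ordinal.succ_ne_zero x (by rwa [← Ordinal.add_one_eq_succ])
    rw [hset]
    have hIio : Iio (0 : Ordinal.{0}) = ∅ :=
      Set.eq_empty_iff_forall_notMem.2 fun x hx => not_lt_zero (Set.mem_Iio.1 hx)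
    exact ⟨empty_subset _, fun α hα => absurd hα (not_lt_zero (a := α)), by rw [hIio]⟩
  · rw [← Ordinal.add_one_eq_succ]
    have hne : ¬ Order.IsSuccLimit (γ + 1 : Ordinal.{0}) := by
      rw [Ordinal.add_one_eq_succ]; exact Order.not_isSuccLimit_succ γ
    have hset : myC c θo (γ + 1) = {γ} := by
      rw [myC, if_neg hne]
      ext x
      simp only [Set.mem_setOf_eq, Set.mem_singleton_iff]
      constructor
      · intro h
        have h1 : x ≤ γ := Order.lt_add_one_iff.1 (h ▸ lt_add_one x)
        have h2 : γ ≤ x := Order.lt_add_one_iff.1 (h ▸ lt_add_one γ : γ < x + 1)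
        exact le_antisymm h1 h2
      · rintro rfl; rfl
    rw [hset]
    refine ⟨fun x hx => ?_, fun α hαβ h0 hsupα => ?_, ?_⟩
    · rw [mem_singleton_iff] at hx
      exact Set.mem_Iio.2 (hx ▸ lt_add_one γ)
    · rcases lt_or_ge γ α with h | h
      · have : ({γ} : Set Ordinal.{0}) ∩ Iio α = {γ} := by
          ext y; simp only [Set.mem_inter_iff, Set.mem_singleton_iff, Set.mem_Iio]
          exact ⟨fun hy => hy.1, fun hy => ⟨hy, hy ▸ h⟩⟩
        rw [this, csSup_singleton] at hsupα
        exact mem_singleton_iff.2 hsupα.symm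
      · have : ({γ} : Set Ordinal.{0}) ∩ Iio α = ∅ := by
          ext y; simp only [Set.mem_inter_iff, Set.mem_singleton_iff, Set.mem_Iio,
            Set.mem_empty_iff_false, iff_false, not_and]
          rintro rfl; exact not_lt.2 h
        rw [this, csSup_empty] at hsupα
        exact absurd hsupα.symm (ne_of_gt h0)
    · rw [csSup_singleton, aux_sSup_Iio_succ]
  · rw [myC, if_pos hlim]
    refine ⟨clIn_subset stair_subset, clIn_closed, ?_⟩
    rw [aux_sSup_Iio_limit hlim]
    refine aux_supReach (clIn_subset stair_subset) (fun z hz => ?_)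
    obtain ⟨x, hxs, hzx⟩ := stair_cofinal hc hlim hβ z hz
    exact ⟨x, Or.inl hxs, hzx⟩

theorem myC_limit_of_sup {c : Ordinal.{0} → Ordinal.{0} → Ordinal.{0}} {θo β δ : Ordinal.{0}} (h0 : 0 < δ)
    (hsup : sSup (myC c θo β ∩ Iio δ) = δ) :
    Order.IsSuccLimit β ∧ sSup (stair c θo β ∩ Iio δ) = δ := by
  rcases Ordinal.zero_or_succ_or_isSuccLimit β with rfl | ⟨γ, rfl⟩ | hlim
  · exfalso
    have hne : ¬ Order.IsSuccLimit (0 : Ordinal.{0}) := Ordinal.not_isSuccLimit_zero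
    rw [myC, if_neg hne] at hsup
    have hset : ({x : Ordinal.{0} | x + 1 = 0} ∩ Iio δ) = ∅ := by
      ext x
      simp only [Set.mem_inter_iff, Set.mem_setOf_eq, Set.mem_empty_iff_false, iff_false, not_and]
      intro hx
      exact absurd (by rwa [← Ordinal.add_one_eq_succ]) (Ordinal.succ_ne_zero x)
    rw [hset, csSup_empty] at hsup
    exact absurd hsup.symm (ne_of_gt h0)
  · exfalso
    rw [← Ordinal.add_one_eq_succ] at hsup
    have hne : ¬ Order.IsSuccLimit (γ + 1 : Ordinal.{0}) := by
      rw [Ordinal.add_one_eq_succ]; exact Order.not_isSuccLimit_succ γ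
    rw [myC, if_neg hne] at hsup
    have hseteq : {x : Ordinal.{0} | x + 1 = γ + 1} = {γ} := by
      ext x
      simp only [Set.mem_setOf_eq, Set.mem_singleton_iff]
      constructor
      · intro h
        exact le_antisymm (Order.lt_add_one_iff.1 (h ▸ lt_add_one x))
          (Order.lt_add_one_iff.1 (h ▸ lt_add_one γ : γ < x + 1))
      · rintro rfl; rfl
    rw [hseteq] at hsup
    rcases lt_or_ge γ δ with h | h
    · have : ({γ} : Set Ordinal.{0}) ∩ Iio δ = {γ} := by
        ext y; simp only [Set.mem_inter_iff, Set.mem_singleton_iff, Set.mem_Iio]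
        exact ⟨fun hy => hy.1, fun hy => ⟨hy, hy ▸ h⟩⟩
      rw [this, csSup_singleton] at hsup
      exact absurd hsup (ne_of_lt h)
    · have : ({γ} : Set Ordinal.{0}) ∩ Iio δ = ∅ := by
        ext y; simp only [Set.mem_inter_iff, Set.mem_singleton_iff, Set.mem_Iio,
          Set.mem_empty_iff_false, iff_false, not_and]
        rintro rfl; exact not_lt.2 h
      rw [this, csSup_empty] at hsup
      exact absurd hsup.symm (ne_of_gt h0)
  · rw [myC, if_pos hlim] at hsup
    exact ⟨hlim, clIn_sup_transfer h0 hsup⟩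


def blockOf (b : Ordinal.{0} → Set Ordinal.{0}) (d : Ordinal.{0}) : Set Ordinal.{0} :=
  ({d} ∪ (b d ∩ Ioi d)) ∪ (fun x => (sSup (b d ∪ {d}) + 1) + x) '' (b d ∩ Iic d)

def topB (b : Ordinal.{0} → Set Ordinal.{0}) (d : Ordinal.{0}) : Ordinal.{0} :=
  sSup (blockOf b d)

section blockLemmas
variable {κ χ' : Cardinal.{0}} {b : Ordinal.{0} → Set Ordinal.{0}} {d : Ordinal.{0}}
  (hκreg : κ.IsRegular) (hχ'κ : χ' < κ)
  (hbd : b d ⊆ Iio κ.ord) (hbcard : Cardinal.mk (b d) = Cardinal.lift.{1} χ')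
  (hd : d < κ.ord)

include hκreg hχ'κ hbd hbcard hd

theorem tau_lt : sSup (b d ∪ {d}) + 1 < κ.ord := by
  have h1 : b d ∪ {d} ⊆ Iio κ.ord := union_subset hbd (singleton_subset_iff.2 hd)
  have h2 : Cardinal.mk (b d ∪ {d} : Set Ordinal.{0}) < Cardinal.lift.{1} κ.ord.cof := by
    rw [hκreg.cof_eq]
    calc Cardinal.mk (b d ∪ {d} : Set Ordinal.{0}) ≤ Cardinal.mk (b d) + Cardinal.mk ({d} : Set Ordinal.{0}) :=
          Cardinal.mk_union_le _ _
    _ = Cardinal.lift.{1} χ' + 1 := by rw [hbcard, Cardinal.mk_singleton]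
    _ = Cardinal.lift.{1} (χ' + 1) := by rw [Cardinal.lift_add, Cardinal.lift_one]
    _ < Cardinal.lift.{1} κ := Cardinal.lift_lt.2
          (Cardinal.add_lt_of_lt hκreg.aleph0_le hχ'κ (lt_of_lt_of_le Cardinal.one_lt_aleph0 hκreg.aleph0_le))
  have := aux_smallSup h1 h2
  exact (Cardinal.isSuccLimit_ord hκreg.aleph0_le).succ_lt this

theorem blockOf_subset : blockOf b d ⊆ Iio κ.ord := by
  rintro x ((hx | hx) | ⟨y, hy, hxy⟩)
  · rw [mem_singleton_iff] at hx
    exact Set.mem_Iio.2 (hx ▸ hd)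
  · exact hbd hx.1
  · refine Set.mem_Iio.2 ?_
    rw [← hxy]
    show sSup (b d ∪ {d}) + 1 + y < κ.ord
    rw [Cardinal.lt_ord, Ordinal.card_add]
    exact Cardinal.add_lt_of_lt hκreg.aleph0_le
      (Cardinal.lt_ord.1 (tau_lt hκreg hχ'κ hbd hbcard hd))
      (Cardinal.lt_ord.1 (hbd hy.1))

theorem blockOf_min : ∀ x ∈ blockOf b d, d ≤ x := by
  rintro x ((hx | hx) | ⟨y, hy, hxy⟩)
  · rw [mem_singleton_iff] at hx
    exact le_of_eq hx.symm
  · exact (le_of_lt hx.2)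
  · rw [← hxy]
    show d ≤ sSup (b d ∪ {d}) + 1 + y
    have h1 : d ≤ sSup (b d ∪ {d}) :=
      aux_le_sSup (union_subset hbd (singleton_subset_iff.2 hd)) (Or.inr rfl)
    exact le_trans h1 (le_trans (le_of_lt (lt_add_one _)) (le_self_add))

omit hκreg hχ'κ hbd hbcard hd in
theorem blockOf_mem_self : d ∈ blockOf b d := Or.inl (Or.inl rfl)

omit hκreg hχ'κ hbd hbcard hd in
theorem blockOf_mem_high {β : Ordinal.{0}} (hβ : β ∈ b d) (hdβ : d ≤ β) : β ∈ blockOf b d := by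
  rcases eq_or_lt_of_le hdβ with rfl | h
  · exact Or.inl (Or.inl rfl)
  · exact Or.inl (Or.inr ⟨hβ, h⟩)

theorem blockOf_card : Cardinal.mk (blockOf b d) = Cardinal.lift.{1} (1 + χ') := by
  have hτ : ∀ y ∈ b d ∪ ({d} : Set Ordinal.{0}), y < sSup (b d ∪ {d}) + 1 := fun y hy =>
    lt_of_le_of_lt (aux_le_sSup (union_subset hbd (singleton_subset_iff.2 hd)) hy) (lt_add_one _)
  have hshift_ge : ∀ y : Ordinal.{0}, sSup (b d ∪ {d}) + 1 ≤ sSup (b d ∪ {d}) + 1 + y :=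
    fun y => le_self_add
  have disj1 : Disjoint ({d} ∪ (b d ∩ Ioi d))
      ((fun x => (sSup (b d ∪ {d}) + 1) + x) '' (b d ∩ Iic d)) := by
    rw [Set.disjoint_left]
    rintro x hx ⟨y, _, hxy⟩
    have hxlt : x < sSup (b d ∪ {d}) + 1 := by
      rcases hx with hx | hx
      · rw [mem_singleton_iff] at hx
        exact hx ▸ hτ d (Or.inr rfl)
      · exact hτ x (Or.inl hx.1)
    have : sSup (b d ∪ {d}) + 1 ≤ x := hxy ▸ hshift_ge y
    exact absurd (lt_of_lt_of_le hxlt this) (lt_irrefl x)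
  have disj2 : Disjoint ({d} : Set Ordinal.{0}) (b d ∩ Ioi d) := by
    rw [Set.disjoint_left]
    rintro x hx hx2
    rw [mem_singleton_iff] at hx
    exact lt_irrefl d (hx ▸ hx2.2)
  have disj3 : Disjoint (b d ∩ Ioi d) (b d ∩ Iic d) := by
    rw [Set.disjoint_left]
    rintro x hx hx'
    exact absurd (Set.mem_Iic.1 hx'.2) (not_le.2 hx.2)
  have hinj : Set.InjOn (fun x => (sSup (b d ∪ {d}) + 1) + x) (b d ∩ Iic d) := by
    intro x _ y _ h
    exact add_left_cancel h
  have hpart : (b d ∩ Ioi d) ∪ (b d ∩ Iic d) = b d := by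
    ext x
    constructor
    · rintro (hx | hx) <;> exact hx.1
    · intro hx
      rcases lt_or_ge d x with h | h
      · exact Or.inl ⟨hx, h⟩
      · exact Or.inr ⟨hx, h⟩
  calc Cardinal.mk (blockOf b d)
      = Cardinal.mk ({d} ∪ (b d ∩ Ioi d) : Set Ordinal.{0}) +
        Cardinal.mk ((fun x => (sSup (b d ∪ {d}) + 1) + x) '' (b d ∩ Iic d)) :=
        Cardinal.mk_union_of_disjoint disj1
    _ = (Cardinal.mk ({d} : Set Ordinal.{0}) + Cardinal.mk (b d ∩ Ioi d : Set Ordinal.{0})) +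
        Cardinal.mk (b d ∩ Iic d : Set Ordinal.{0}) := by
        rw [Cardinal.mk_union_of_disjoint disj2, Cardinal.mk_image_eq_of_injOn _ _ hinj]
    _ = 1 + (Cardinal.mk (b d ∩ Ioi d : Set Ordinal.{0}) + Cardinal.mk (b d ∩ Iic d : Set Ordinal.{0})) := by
        rw [Cardinal.mk_singleton, add_assoc]
    _ = 1 + Cardinal.mk (b d) := by rw [← Cardinal.mk_union_of_disjoint disj3, hpart]
    _ = Cardinal.lift.{1} (1 + χ') := by
        rw [hbcard, Cardinal.lift_add, Cardinal.lift_one]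

theorem topB_lt : topB b d < κ.ord := by
  refine aux_smallSup (blockOf_subset hκreg hχ'κ hbd hbcard hd) ?_
  rw [blockOf_card hκreg hχ'κ hbd hbcard hd, hκreg.cof_eq]
  refine Cardinal.lift_lt.2 (Cardinal.add_lt_of_lt hκreg.aleph0_le ?_ hχ'κ)
  exact lt_of_lt_of_le Cardinal.one_lt_aleph0 hκreg.aleph0_le

end blockLemmas

theorem aux_cover_pigeon {δ : Ordinal.{0}} {X s : Set Ordinal.{0}}
    {Y : Ordinal.{0} → Set Ordinal.{0}}
    (h0 : 0 < δ) (hXsub : X ⊆ Iio δ) (hXsup : sSup X = δ) (hcov : X ⊆ ⋃ β ∈ s, Y β)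
    (hcard : Cardinal.mk s < Cardinal.lift.{1} δ.cof) :
    ∃ β ∈ s, sSup (Y β ∩ X) = δ := by
  by_contra hcon
  push_neg at hcon
  have hlt : ∀ β ∈ s, sSup (Y β ∩ X) < δ := fun β hβ =>
    lt_of_le_of_ne (aux_sSup_le (fun x hx => hXsub hx.2)) (hcon β hβ)
  set T : Set Ordinal.{0} := (fun β => sSup (Y β ∩ X)) '' s with hT
  have hTsub : T ⊆ Iio δ := by rintro x ⟨β, hβ, rfl⟩; exact hlt β hβ
  have hTcard : Cardinal.mk T < Cardinal.lift.{1} δ.cof :=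
    lt_of_le_of_lt Cardinal.mk_image_le hcard
  have hTsup : sSup T < δ := aux_smallSup hTsub hTcard
  have hub : ∀ x ∈ X, x ≤ sSup T := by
    intro x hx
    obtain ⟨β, hβ, hxY⟩ := Set.mem_iUnion₂.1 (hcov hx)
    calc x ≤ sSup (Y β ∩ X) := aux_le_sSup (fun y hy => hXsub hy.2) ⟨hxY, hx⟩
      _ ≤ sSup T := aux_le_sSup hTsub ⟨β, hβ, rfl⟩
  have : sSup X ≤ sSup T := csSup_le' hub
  rw [hXsup] at this
  exact absurd (lt_of_le_of_lt this hTsup) (lt_irrefl δ)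

-- NEW: unbounded set has full cardinality
theorem aux_mk_unbounded {κ : Cardinal.{0}} (hκreg : κ.IsRegular) {K : Set Ordinal.{0}}
    (hsub : K ⊆ Iio κ.ord) (hunb : ∀ z < κ.ord, ∃ x ∈ K, z < x) :
    Cardinal.mk K = Cardinal.lift.{1} κ := by
  refine le_antisymm ?_ ?_
  · calc Cardinal.mk K ≤ Cardinal.mk (Iio κ.ord) := Cardinal.mk_le_mk_of_subset hsub
      _ = Cardinal.lift.{1} κ := by rw [Ordinal.mk_Iio_ordinal, Cardinal.card_ord]
  · by_contra hcon
    push_neg at hcon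
    have hKs : sSup K < κ.ord := by
      refine aux_smallSup hsub ?_
      rwa [hκreg.cof_eq]
    obtain ⟨x, hxK, hx⟩ := hunb _ hKs
    exact absurd (aux_le_sSup hsub hxK) (not_le.2 hx)

-- NEW: club construction
theorem aux_club {κ : Cardinal.{0}} (hκreg : κ.IsRegular) (hκunc : Cardinal.aleph0 < κ)
    {Δ : Set Ordinal.{0}} (hΔsub : Δ ⊆ Iio κ.ord) (hΔunb : ∀ z < κ.ord, ∃ x ∈ Δ, z < x)
    (Bf : Ordinal.{0} → Ordinal.{0}) (hBf : ∀ ε, ε < κ.ord → Bf ε < κ.ord) :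
    IsClubIn {γ | γ < κ.ord ∧ 0 < γ ∧ sSup (Δ ∩ Iio γ) = γ ∧ ∀ ε < γ, Bf ε < γ} κ.ord := by
  have hord0 : (0 : Ordinal.{0}) < κ.ord :=
    Cardinal.lt_ord.2 (by rw [Ordinal.card_zero]; exact lt_of_lt_of_le Cardinal.aleph0_pos hκreg.aleph0_le)
  have hordlim : Order.IsSuccLimit κ.ord := Cardinal.isSuccLimit_ord hκreg.aleph0_le
  -- helper functions
  set dAb : Ordinal.{0} → Ordinal.{0} := fun x => sInf {t | t ∈ Δ ∧ x < t} with hdAb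
  have hdAbmem : ∀ x < κ.ord, dAb x ∈ Δ ∧ x < dAb x := by
    intro x hx
    obtain ⟨t, ht, hxt⟩ := hΔunb x hx
    have hne : {t : Ordinal.{0} | t ∈ Δ ∧ x < t}.Nonempty := ⟨t, ht, hxt⟩
    exact csInf_mem hne
  set sB : Ordinal.{0} → Ordinal.{0} := fun x => sSup ((fun ε => Bf ε + 1) '' Iio x) with hsB
  have hsBlt : ∀ x < κ.ord, sB x < κ.ord := by
    intro x hx
    refine aux_smallSup ?_ ?_
    · rintro y ⟨ε, hε, rfl⟩
      exact hordlim.succ_lt (hBf ε (lt_trans hε hx))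
    · refine lt_of_le_of_lt Cardinal.mk_image_le ?_
      rw [Ordinal.mk_Iio_ordinal, hκreg.cof_eq]
      exact Cardinal.lift_lt.2 (Cardinal.lt_ord.1 hx)
  set step : Ordinal.{0} → Ordinal.{0} := fun x => max (max (dAb x + 1) (sB x)) (x + 1) with hstep
  have hsteplt : ∀ x < κ.ord, step x < κ.ord := by
    intro x hx
    refine max_lt (max_lt ?_ (hsBlt x hx)) (hordlim.succ_lt hx)
    exact hordlim.succ_lt (hΔsub (hdAbmem x hx).1)
  have hstepgt : ∀ x, x < step x := fun x => lt_of_lt_of_le (lt_add_one x) (le_max_right _ _)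
  constructor
  · exact fun γ hγ => hγ.1
  constructor
  · -- unbounded
    intro z hz
    set iter : ℕ → Ordinal.{0} := fun n => Nat.rec (z + 1) (fun _ ih => step ih) n with hiter
    have hiterlt : ∀ n, iter n < κ.ord := by
      intro n
      induction n with
      | zero => exact hordlim.succ_lt hz
      | succ n ih => exact hsteplt _ ih
    have hitermono : ∀ n, iter n < iter (n + 1) := fun n => hstepgt (iter n)
    set y := sSup (Set.range iter) with hy
    have hrsub : Set.range iter ⊆ Iio κ.ord := by rintro x ⟨n, rfl⟩; exact hiterlt n
    have hylt : y < κ.ord := by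
      refine aux_smallSup hrsub ?_
      have hre : Set.range iter = Set.range (fun n : ULift.{1} ℕ => iter n.down) := by
        ext x
        constructor
        · rintro ⟨n, rfl⟩; exact ⟨⟨n⟩, rfl⟩
        · rintro ⟨n, rfl⟩; exact ⟨n.down, rfl⟩
      have h1 : Cardinal.mk (Set.range iter) ≤ (Cardinal.aleph0 : Cardinal.{1}) := by
        rw [hre]
        calc Cardinal.mk (Set.range (fun n : ULift.{1} ℕ => iter n.down))
            ≤ Cardinal.mk (ULift.{1} ℕ) := Cardinal.mk_range_le
          _ = (Cardinal.aleph0 : Cardinal.{1}) := by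
              rw [Cardinal.mk_uLift, Cardinal.mk_nat, Cardinal.lift_aleph0]
      rw [hκreg.cof_eq]
      refine lt_of_le_of_lt h1 ?_
      rw [← Cardinal.lift_aleph0.{1,0}]
      exact Cardinal.lift_lt.2 hκunc
    have hley : ∀ n, iter n ≤ y := fun n => aux_le_sSup hrsub ⟨n, rfl⟩
    have hylty : ∀ n, iter n < y := fun n => lt_of_lt_of_le (hitermono n) (hley (n + 1))
    have hbelow : ∀ w, w < y → ∃ n, w < iter n := by
      intro w hw
      by_contra hcon
      push_neg at hcon
      have : y ≤ w := csSup_le' (by rintro x ⟨n, rfl⟩; exact hcon n)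
      exact absurd (lt_of_lt_of_le hw this) (lt_irrefl w)
    refine ⟨y, ⟨hylt, lt_of_le_of_lt (zero_le : (0 : Ordinal.{0}) ≤ iter 0) (hylty 0), ?_, ?_⟩, le_of_lt (lt_of_lt_of_le (lt_add_one z) (hley 0))⟩
    · -- sSup (Δ ∩ Iio y) = y
      refine aux_supReach (fun x hx => hx.2) ?_
      intro w hw
      obtain ⟨n, hn⟩ := hbelow w hw
      refine ⟨dAb (iter n), ⟨(hdAbmem _ (hiterlt n)).1, ?_⟩, lt_trans hn (hdAbmem _ (hiterlt n)).2⟩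
      have h1 : dAb (iter n) + 1 ≤ iter (n + 1) := le_trans (le_max_left _ _) (le_max_left _ _)
      exact Set.mem_Iio.2 (lt_of_lt_of_le (lt_of_lt_of_le (lt_add_one _) h1) (hley (n + 1)))
    · -- Bf closure
      intro ε hε
      obtain ⟨n, hn⟩ := hbelow ε hε
      have himsub : (fun ε => Bf ε + 1) '' Iio (iter n) ⊆ Iio κ.ord := by
        rintro x ⟨ε', hε', rfl⟩
        exact Set.mem_Iio.2 (hordlim.succ_lt (hBf ε' (lt_trans hε' (hiterlt n))))
      have h1 : Bf ε + 1 ≤ sB (iter n) := aux_le_sSup himsub ⟨ε, hn, rfl⟩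
      have h2 : sB (iter n) ≤ iter (n + 1) := le_trans (le_max_right _ _) (le_max_left _ _)
      exact lt_of_lt_of_le (lt_of_lt_of_le (lt_add_one _) (le_trans h1 h2)) (hley (n + 1))
  · -- closed
    intro γ hγκ h0 hsup
    have hcof : ∀ w < γ, ∃ f, f ∈ {γ' | γ' < κ.ord ∧ 0 < γ' ∧ sSup (Δ ∩ Iio γ') = γ' ∧ ∀ ε < γ', Bf ε < γ'} ∧ w < f ∧ f < γ := by
      intro w hw
      have hne : ∃ x ∈ {γ' | γ' < κ.ord ∧ 0 < γ' ∧ sSup (Δ ∩ Iio γ') = γ' ∧ ∀ ε < γ', Bf ε < γ'} ∩ Iio γ, w < x := by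
        by_contra hcon
        push_neg at hcon
        have : sSup ({γ' | γ' < κ.ord ∧ 0 < γ' ∧ sSup (Δ ∩ Iio γ') = γ' ∧ ∀ ε < γ', Bf ε < γ'} ∩ Iio γ) ≤ w :=
          csSup_le' (fun x hx => hcon x hx)
        rw [hsup] at this
        exact absurd (lt_of_lt_of_le hw this) (lt_irrefl w)
      obtain ⟨x, ⟨hx1, hx2⟩, hx3⟩ := hne
      exact ⟨x, hx1, hx3, hx2⟩
    refine ⟨hγκ, h0, ?_, ?_⟩
    · refine aux_supReach (fun x hx => hx.2) ?_
      intro w hw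
      obtain ⟨f, hf, hwf, hfγ⟩ := hcof w hw
      have : ∃ x ∈ Δ ∩ Iio f, w < x := by
        rw [← hf.2.2.1] at hwf
        obtain ⟨x, hx, hwx⟩ := aux_exists_gt hwf
        exact ⟨x, hx, hwx⟩
      obtain ⟨x, hx, hwx⟩ := this
      exact ⟨x, ⟨hx.1, Set.mem_Iio.2 (lt_trans hx.2 hfγ)⟩, hwx⟩
    · intro ε hε
      obtain ⟨f, hf, hwf, hfγ⟩ := hcof ε hε
      exact lt_trans (hf.2.2.2 ε hwf) hfγ


def dseq (S : Set Ordinal.{0}) (top : Ordinal.{0} → Ordinal.{0}) : Ordinal.{0} → Ordinal.{0} :=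
  WellFounded.fix Ordinal.lt_wf
    (fun k IH => sInf {x | x ∈ S ∧ sSup {y | ∃ j, ∃ h : j < k, y = top (IH j h) + 1} < x})

def Mset (S : Set Ordinal.{0}) (top : Ordinal.{0} → Ordinal.{0}) (k : Ordinal.{0}) :
    Set Ordinal.{0} :=
  {y | ∃ j, ∃ _ : j < k, y = top (dseq S top j) + 1}

theorem dseq_eq (S : Set Ordinal.{0}) (top : Ordinal.{0} → Ordinal.{0}) (k : Ordinal.{0}) :
    dseq S top k = sInf {x | x ∈ S ∧ sSup (Mset S top k) < x} := by
  rw [dseq, WellFounded.fix_eq]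
  rfl

theorem dseq_prop {κ : Cardinal.{0}} (hκreg : κ.IsRegular)
    {S : Set Ordinal.{0}} (hSsub : S ⊆ Iio κ.ord)
    (hSunb : ∀ z < κ.ord, ∃ x ∈ S, z < x)
    {top : Ordinal.{0} → Ordinal.{0}} (htop : ∀ d, d < κ.ord → top d < κ.ord) :
    ∀ k, k < κ.ord → dseq S top k ∈ S ∧ sSup (Mset S top k) < dseq S top k ∧
      sSup (Mset S top k) < κ.ord := by
  have hlim : Order.IsSuccLimit κ.ord := Cardinal.isSuccLimit_ord hκreg.aleph0_le
  intro k
  induction k using Ordinal.induction with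
  | _ k IH =>
    intro hk
    have hMsub : Mset S top k ⊆ Iio κ.ord := by
      rintro y ⟨j, hj, rfl⟩
      have hjκ : j < κ.ord := lt_trans hj hk
      exact Set.mem_Iio.2 (hlim.succ_lt (htop _ (hSsub ((IH j hj hjκ).1))))
    have hMim : Mset S top k = (fun j => top (dseq S top j) + 1) '' Iio k := by
      ext y
      constructor
      · rintro ⟨j, hj, rfl⟩; exact ⟨j, hj, rfl⟩
      · rintro ⟨j, hj, rfl⟩; exact ⟨j, hj, rfl⟩
    have hMcard : Cardinal.mk (Mset S top k) < Cardinal.lift.{1} κ.ord.cof := by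
      rw [hMim, hκreg.cof_eq]
      calc Cardinal.mk ((fun j => top (dseq S top j) + 1) '' Iio k)
          ≤ Cardinal.mk (Iio k) := Cardinal.mk_image_le
        _ = Cardinal.lift.{1} k.card := Ordinal.mk_Iio_ordinal k
        _ < Cardinal.lift.{1} κ := Cardinal.lift_lt.2 (Cardinal.lt_ord.1 hk)
    have hM : sSup (Mset S top k) < κ.ord := aux_smallSup hMsub hMcard
    obtain ⟨x, hxS, hMx⟩ := hSunb _ hM
    have hne : {x : Ordinal.{0} | x ∈ S ∧ sSup (Mset S top k) < x}.Nonempty := ⟨x, hxS, hMx⟩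
    have := csInf_mem hne
    rw [← dseq_eq] at this
    exact ⟨this.1, this.2, hM⟩

-- NEW : pigeonhole
theorem aux_pigeon {κ : Cardinal.{0}} (hκreg : κ.IsRegular) {θo : Ordinal.{0}}
    (hθκ : θo < κ.ord) (T : Ordinal.{0} → Ordinal.{0}) (hT : ∀ k, k < κ.ord → T k < θo) :
    ∃ i, i < θo ∧ ∀ z, z < κ.ord → ∃ k, z < k ∧ k < κ.ord ∧ T k ≤ i := by
  have hlim : Order.IsSuccLimit κ.ord := Cardinal.isSuccLimit_ord hκreg.aleph0_le
  by_contra hcon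
  push_neg at hcon
  have hch : ∀ i : Ordinal.{0}, ∃ z : Ordinal.{0}, i < θo → (z < κ.ord ∧
      ∀ k, z < k → k < κ.ord → ¬ T k ≤ i) := by
    intro i
    by_cases hi : i < θo
    · obtain ⟨z, hz, hzp⟩ := hcon i hi
      exact ⟨z, fun _ => ⟨hz, fun k hzk hkκ hTk => absurd hTk (not_le.2 (hzp k hzk hkκ))⟩⟩
    · exact ⟨0, fun h => absurd h hi⟩
  choose Bf hBf using hch
  set k₀ : Ordinal.{0} := sSup ((fun i => Bf i + 1) '' Iio θo) with hk₀
  have hk₀κ : k₀ < κ.ord := by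
    refine aux_smallSup ?_ ?_
    · rintro y ⟨i, hi, rfl⟩
      exact Set.mem_Iio.2 (hlim.succ_lt (hBf i hi).1)
    · calc Cardinal.mk ((fun i => Bf i + 1) '' Iio θo) ≤ Cardinal.mk (Iio θo) :=
          Cardinal.mk_image_le
        _ = Cardinal.lift.{1} θo.card := Ordinal.mk_Iio_ordinal θo
        _ < Cardinal.lift.{1} κ.ord.cof := by
            rw [hκreg.cof_eq]; exact Cardinal.lift_lt.2 (Cardinal.lt_ord.1 hθκ)
  have hTk₀ : T k₀ < θo := hT k₀ hk₀κ
  have hBk : Bf (T k₀) + 1 ≤ k₀ := by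
    refine aux_le_sSup (o := κ.ord) ?_ ⟨T k₀, hTk₀, rfl⟩
    rintro y ⟨i, hi, rfl⟩
    exact Set.mem_Iio.2 (hlim.succ_lt (hBf i hi).1)
  exact (hBf (T k₀) hTk₀).2 k₀ (lt_of_lt_of_le (lt_add_one _) hBk) hk₀κ le_rfl


theorem aux_kappa_mem {κ : Cardinal.{0}} (hκreg : κ.IsRegular) :
    κ ≤ κ ∧ ∀ C, IsCSeq κ.ord C → CSeqCovers κ (Iio κ.ord) C κ := by
  have hκlim : Order.IsSuccLimit κ.ord := Cardinal.isSuccLimit_ord hκreg.aleph0_le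
  have h0κ : (0 : Ordinal.{0}) < κ.ord := hκlim.pos
  refine ⟨le_rfl, fun C hC => ?_⟩
  refine ⟨Iio κ.ord \ {0}, fun _ => Iio κ.ord, fun x hx => hx.1, ?_, ?_, ?_⟩
  · -- MkEq Δ κ
    have hd : Cardinal.mk (Iio κ.ord \ {0} : Set Ordinal.{0}) + Cardinal.mk ({0} : Set Ordinal.{0})
        = Cardinal.mk (Iio κ.ord) := Cardinal.mk_diff_add_mk (singleton_subset_iff.2 h0κ)
    rw [Cardinal.mk_singleton, Ordinal.mk_Iio_ordinal, Cardinal.card_ord] at hd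
    have ha : Cardinal.aleph0 ≤ Cardinal.mk (Iio κ.ord \ {0} : Set Ordinal.{0}) := by
      by_contra hcon
      push_neg at hcon
      have h1 : Cardinal.mk (Iio κ.ord \ {0} : Set Ordinal.{0}) + 1 < Cardinal.aleph0 :=
        Cardinal.add_lt_aleph0 hcon Cardinal.one_lt_aleph0
      rw [hd] at h1
      have h2 : Cardinal.aleph0 ≤ Cardinal.lift.{1} κ := by
        rw [← Cardinal.lift_aleph0.{1,0}]
        exact Cardinal.lift_le.2 hκreg.aleph0_le
      exact absurd h2 (not_le.2 h1)
    have heq : Cardinal.mk (Iio κ.ord \ {0} : Set Ordinal.{0}) + 1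
        = Cardinal.mk (Iio κ.ord \ {0} : Set Ordinal.{0}) :=
      Cardinal.add_eq_left ha (le_trans Cardinal.one_le_aleph0 ha)
    rw [MkEq, ← hd, heq]
  · intro α _
    refine ⟨fun x hx => hx, ?_⟩
    rw [MkEq, Ordinal.mk_Iio_ordinal, Cardinal.card_ord]
  · rintro α hα x ⟨⟨hxκ, hx0⟩, hxα⟩
    have hx0' : (0 : Ordinal.{0}) < x := by
      rcases Ordinal.zero_or_succ_or_isSuccLimit x with rfl | _ | h
      · exact absurd rfl hx0
      · exact pos_iff_ne_zero.2 hx0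
      · exact h.pos
    have hsucc : x + 1 < κ.ord := hκlim.succ_lt hxκ
    obtain ⟨hsub, hcl, hsup⟩ := hC (x + 1) hsucc
    have hx1 : x ∈ C (x + 1) := by
      by_contra hmem
      have hCsub : C (x + 1) ⊆ Iio x := by
        intro y hy
        refine Set.mem_Iio.2 (lt_of_le_of_ne (Order.lt_add_one_iff.1 (hsub hy)) ?_)
        rintro rfl
        exact hmem hy
      have hint : C (x + 1) ∩ Iio x = C (x + 1) := inter_eq_self_of_subset_left hCsub
      have hs : sSup (C (x + 1) ∩ Iio x) = x := by
        rw [hint, hsup, aux_sSup_Iio_succ]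
      exact hmem (hcl x (lt_add_one x) hx0' hs)
    exact Set.mem_iUnion₂.2 ⟨x + 1, hsucc, hx1⟩

theorem statement17
    (κ : Cardinal.{0}) (hκreg : κ.IsRegular) (hκunc : Cardinal.aleph0 < κ)
    (χ θ : Cardinal.{0}) (hχ : Cardinal.aleph0 ≤ χ) (hχθ : χ ≤ θ)
    (hθreg : θ.IsRegular) (hθκ : θ < κ)
    (Sta : Set Ordinal.{0}) (hStaSub : Sta ⊆ {α | α < κ.ord ∧ χ ≤ α.cof})
    (hStaStat : IsStationaryIn Sta κ.ord)
    (c : Ordinal.{0} → Ordinal.{0} → Ordinal.{0})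
    (hc : ColoringInto κ.ord θ.ord c)
    (hclosed : IsClosedColoringOn Sta κ.ord θ.ord c)
    (hwit : WitnessU κ 2 θ χ c) :
    χ ≤ chiNum κ := by
  have hκlim : Order.IsSuccLimit κ.ord := Cardinal.isSuccLimit_ord hκreg.aleph0_le
  have hθo : θ.ord < κ.ord := Cardinal.ord_lt_ord.2 hθκ
  refine le_csInf ⟨κ, aux_kappa_mem hκreg⟩ ?_
  rintro χ' ⟨hχ'κ, hcovAll⟩
  by_contra hcon
  push_neg at hcon
  -- χ' facts
  have hχ'θ : χ' < θ := lt_of_lt_of_le hcon hχθ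
  have hχ'κc : χ' < κ := lt_trans hχ'θ hθκ
  -- covering for our C-sequence
  have hCseq : IsCSeq κ.ord (myC c θ.ord) := myC_isCSeq hc
  obtain ⟨Δ, b, hΔsub, hΔκ, hb, hcover⟩ := hcovAll _ hCseq
  have hΔunb : ∀ z < κ.ord, ∃ x ∈ Δ, z < x := fun z hz =>
    aux_unbounded hκreg.aleph0_le (le_of_eq hΔκ.symm) hz
  -- stationary set S
  have hSmem : ∀ δ, δ ∈ Sta → 0 < δ → sSup (Δ ∩ Iio δ) = δ →
      δ ∈ Sta ∧ δ < κ.ord ∧ χ ≤ δ.cof := fun δ h1 _ _ => ⟨h1, (hStaSub h1).1, (hStaSub h1).2⟩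
  set S : Set Ordinal.{0} := {δ | δ ∈ Sta ∧ 0 < δ ∧ sSup (Δ ∩ Iio δ) = δ} with hSdef
  have hSκ : ∀ δ ∈ S, δ < κ.ord := fun δ hδ => (hStaSub hδ.1).1
  have hScof : ∀ δ ∈ S, χ ≤ δ.cof := fun δ hδ => (hStaSub hδ.1).2
  set g : Ordinal.{0} → Ordinal.{0} := fun δ => sSup (b δ ∩ Iio δ) with hgdef
  have hgδ : ∀ δ ∈ S, g δ < δ := by
    intro δ hδ
    refine aux_smallSup (fun x hx => hx.2) ?_
    calc Cardinal.mk (b δ ∩ Iio δ : Set Ordinal.{0}) ≤ Cardinal.mk (b δ) :=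
        Cardinal.mk_le_mk_of_subset inter_subset_left
      _ = Cardinal.lift.{1} χ' := (hb δ (hSκ δ hδ)).2
      _ < Cardinal.lift.{1} χ := Cardinal.lift_lt.2 hcon
      _ ≤ Cardinal.lift.{1} δ.cof := Cardinal.lift_le.2 (hScof δ hδ)
  -- Fodor-style step
  have hFodor : ∃ ε, ε < κ.ord ∧ ∀ B, B < κ.ord → ∃ δ ∈ S, B < δ ∧ g δ ≤ ε := by
    by_contra hcF
    push_neg at hcF
    have hch : ∀ ε : Ordinal.{0}, ∃ B : Ordinal.{0}, ε < κ.ord →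
        (B < κ.ord ∧ ∀ δ ∈ S, B < δ → ε < g δ) := by
      intro ε
      by_cases hε : ε < κ.ord
      · obtain ⟨B, hB, hBp⟩ := hcF ε hε
        exact ⟨B, fun _ => ⟨hB, fun δ hδ hBδ => hBp δ hδ hBδ⟩⟩
      · exact ⟨0, fun h => absurd h hε⟩
    choose Bf hBf using hch
    have hclub := aux_club hκreg hκunc hΔsub hΔunb Bf (fun ε hε => (hBf ε hε).1)
    obtain ⟨δ, hδSta, hδF⟩ := hStaStat _ hclub
    have hδS : δ ∈ S := ⟨hδSta, hδF.2.1, hδF.2.2.1⟩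
    have hgκ : g δ < κ.ord := lt_trans (hgδ δ hδS) hδF.1
    have := (hBf (g δ) hgκ).2 δ hδS (hδF.2.2.2 _ (hgδ δ hδS))
    exact absurd this (lt_irrefl _)
  obtain ⟨ε₀, hε₀κ, hSfod⟩ := hFodor
  -- unbounded pool
  set S3 : Set Ordinal.{0} := {δ | δ ∈ S ∧ g δ ≤ ε₀ ∧ ε₀ < δ} with hS3def
  have hS3unb : ∀ z < κ.ord, ∃ x ∈ S3, z < x := by
    intro z hz
    obtain ⟨δ, hδS, hBδ, hgδ'⟩ := hSfod _ (max_lt hz hε₀κ)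
    exact ⟨δ, ⟨hδS, hgδ', lt_of_le_of_lt (le_max_right _ _) hBδ⟩,
      lt_of_le_of_lt (le_max_left _ _) hBδ⟩
  have hS3sub : S3 ⊆ Iio κ.ord := fun δ hδ => Set.mem_Iio.2 (hSκ δ hδ.1)
  -- blocks
  have hbb : ∀ d, d < κ.ord → b d ⊆ Iio κ.ord := fun d hd => (hb d hd).1
  have hbc : ∀ d, d < κ.ord → Cardinal.mk (b d) = Cardinal.lift.{1} χ' :=
    fun d hd => (hb d hd).2
  have htopκ : ∀ d, d < κ.ord → topB b d < κ.ord :=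
    fun d hd => topB_lt hκreg hχ'κc (hbb d hd) (hbc d hd) hd
  set dδ : Ordinal.{0} → Ordinal.{0} := dseq S3 (topB b) with hdδdef
  have hdprop := dseq_prop hκreg hS3sub hS3unb htopκ
  have hdS3 : ∀ k, k < κ.ord → dδ k ∈ S3 := fun k hk => (hdprop k hk).1
  have hdκ : ∀ k, k < κ.ord → dδ k < κ.ord := fun k hk => hSκ _ (hdS3 k hk).1
  set Mk : Ordinal.{0} → Ordinal.{0} := fun k => sSup (Mset S3 (topB b) k) with hMkdef
  have hMsub : ∀ k, k < κ.ord → Mset S3 (topB b) k ⊆ Iio κ.ord := by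
    intro k hk
    rintro y ⟨j, hj, rfl⟩
    exact Set.mem_Iio.2 (hκlim.succ_lt (htopκ _ (hdκ j (lt_trans hj hk))))
  have hMlt : ∀ k, k < κ.ord → Mk k < dδ k := fun k hk => (hdprop k hk).2.1
  have htopM : ∀ j k, j < k → k < κ.ord → topB b (dδ j) < Mk k + 1 ∧ topB b (dδ j) + 1 ≤ Mk k := by
    intro j k hjk hk
    have h1 : topB b (dδ j) + 1 ∈ Mset S3 (topB b) k := ⟨j, hjk, rfl⟩
    have h2 : topB b (dδ j) + 1 ≤ Mk k := aux_le_sSup (hMsub k hk) h1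
    exact ⟨lt_of_lt_of_le (lt_of_lt_of_le (lt_add_one _) h2) (le_of_lt (lt_add_one _)), h2⟩
  have hmono : ∀ j k, j < k → k < κ.ord → topB b (dδ j) < dδ k := by
    intro j k hjk hk
    exact lt_of_lt_of_le (lt_of_lt_of_le (lt_add_one _) (htopM j k hjk hk).2)
      (le_of_lt (hMlt k hk))
  have hdtop : ∀ k, k < κ.ord → dδ k ≤ topB b (dδ k) := by
    intro k hk
    exact aux_le_sSup (blockOf_subset hκreg hχ'κc (hbb _ (hdκ k hk)) (hbc _ (hdκ k hk)) (hdκ k hk))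
      blockOf_mem_self
  have hdmono : ∀ j k, j < k → k < κ.ord → dδ j < dδ k := fun j k hjk hk =>
    lt_of_le_of_lt (hdtop j (lt_trans hjk hk)) (hmono j k hjk hk)
  -- color bound function and pigeonhole
  set T : Ordinal.{0} → Ordinal.{0} :=
    fun k => sSup ((fun β => tIdx c θ.ord β (Mk k)) '' (b (dδ k) ∩ Ici (dδ k))) with hTdef
  have hTθ : ∀ k, k < κ.ord → T k < θ.ord := by
    intro k hk
    refine aux_smallSup ?_ ?_
    · rintro y ⟨β, hβ, rfl⟩
      have hβκ : β < κ.ord := hbb _ (hdκ k hk) hβ.1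
      have hMkβ : Mk k < β := lt_of_lt_of_le (hMlt k hk) hβ.2
      exact Set.mem_Iio.2 (tIdx_mem hc hMkβ hβκ).1
    · rw [hθreg.cof_eq]
      calc Cardinal.mk ((fun β => tIdx c θ.ord β (Mk k)) '' (b (dδ k) ∩ Ici (dδ k)))
          ≤ Cardinal.mk (b (dδ k) ∩ Ici (dδ k) : Set Ordinal.{0}) := Cardinal.mk_image_le
        _ ≤ Cardinal.mk (b (dδ k)) := Cardinal.mk_le_mk_of_subset inter_subset_left
        _ = Cardinal.lift.{1} χ' := hbc _ (hdκ k hk)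
        _ < Cardinal.lift.{1} θ := Cardinal.lift_lt.2 hχ'θ
  obtain ⟨i₀, hi₀θ, hKunb'⟩ := aux_pigeon hκreg hθo T hTθ
  set K : Set Ordinal.{0} := {k | k < κ.ord ∧ T k ≤ i₀} with hKdef
  have hKunb : ∀ z < κ.ord, ∃ x ∈ K, z < x := by
    intro z hz
    obtain ⟨k, h1, h2, h3⟩ := hKunb' z hz
    exact ⟨k, ⟨h2, h3⟩, h1⟩
  have hKsub : K ⊆ Iio κ.ord := fun k hk => Set.mem_Iio.2 hk.1
  -- the main crossing fact
  have hcross : ∀ k₁, k₁ ∈ K → ∀ k₂, k₂ ∈ K → k₁ < k₂ →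
      ∃ β' ∈ blockOf b (dδ k₂), c (dδ k₁) β' ≤ i₀ := by
    intro k₁ hk₁ k₂ hk₂ hlt
    have hk₁κ : k₁ < κ.ord := hk₁.1
    have hk₂κ : k₂ < κ.ord := hk₂.1
    have hδ₁S3 := hdS3 k₁ hk₁κ
    have hδ₂S3 := hdS3 k₂ hk₂κ
    have hδ₁S : dδ k₁ ∈ S := hδ₁S3.1
    have h0δ₁ : 0 < dδ k₁ := hδ₁S.2.1
    have hδ₁Sta : dδ k₁ ∈ Sta := hδ₁S.1
    have hδ₁δ₂ : dδ k₁ < dδ k₂ := hdmono k₁ k₂ hlt hk₂κ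
    have hδ₂κ : dδ k₂ < κ.ord := hdκ k₂ hk₂κ
    have hδ₁κ : dδ k₁ < κ.ord := hdκ k₁ hk₁κ
    -- covering applied at level dδ k₂
    have hXsup : sSup (Δ ∩ Iio (dδ k₁)) = dδ k₁ := hδ₁S.2.2
    have hXcov : Δ ∩ Iio (dδ k₁) ⊆ ⋃ β ∈ b (dδ k₂), myC c θ.ord β := by
      intro x hx
      exact hcover (dδ k₂) hδ₂κ ⟨hx.1, Set.mem_Iio.2 (lt_trans hx.2 hδ₁δ₂)⟩
    have hcard : Cardinal.mk (b (dδ k₂)) < Cardinal.lift.{1} (dδ k₁).cof := by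
      rw [hbc _ hδ₂κ]
      exact lt_of_lt_of_le (Cardinal.lift_lt.2 hcon) (Cardinal.lift_le.2 (hScof _ hδ₁S))
    obtain ⟨β', hβ'b, hβ'sup⟩ :=
      aux_cover_pigeon h0δ₁ (fun x hx => hx.2) hXsup hXcov hcard
    have hβ'κ : β' < κ.ord := hbb _ hδ₂κ hβ'b
    have hCne : (myC c θ.ord β' ∩ (Δ ∩ Iio (dδ k₁))).Nonempty := by
      rcases (myC c θ.ord β' ∩ (Δ ∩ Iio (dδ k₁))).eq_empty_or_nonempty with he | he
      · rw [he, csSup_empty] at hβ'sup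
        exact absurd hβ'sup.symm (ne_of_gt h0δ₁)
      · exact he
    have hsupC : sSup (myC c θ.ord β' ∩ Iio (dδ k₁)) = dδ k₁ := by
      refine le_antisymm (csSup_le' (fun x hx => hx.2.le)) ?_
      calc dδ k₁ = sSup (myC c θ.ord β' ∩ (Δ ∩ Iio (dδ k₁))) := hβ'sup.symm
        _ ≤ sSup (myC c θ.ord β' ∩ Iio (dδ k₁)) :=
            csSup_le_csSup (aux_bdd (fun x hx => hx.2)) hCne
              (fun x hx => ⟨hx.1, hx.2.2⟩)
    -- β' is at or above dδ k₂
    have hβ'δ₂ : dδ k₂ ≤ β' := by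
      by_contra hcon2
      push_neg at hcon2
      have h1 : β' ≤ g (dδ k₂) := aux_le_sSup (fun x hx => hx.2) ⟨hβ'b, hcon2⟩
      have h2 : β' < dδ k₁ :=
        lt_of_le_of_lt (le_trans h1 hδ₂S3.2.1) hδ₁S3.2.2
      have hCsub : myC c θ.ord β' ⊆ Iio β' := (hCseq β' hβ'κ).1
      have h3 : sSup (myC c θ.ord β' ∩ Iio (dδ k₁)) ≤ β' :=
        aux_sSup_le (fun x hx => hCsub hx.1)
      rw [hsupC] at h3
      exact absurd (lt_of_le_of_lt h3 h2) (lt_irrefl _)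
    have hδ₁β' : dδ k₁ < β' := lt_of_lt_of_le hδ₁δ₂ hβ'δ₂
    obtain ⟨hβ'lim, hstairsup⟩ := myC_limit_of_sup h0δ₁ hsupC
    have hkey : c (dδ k₁) β' ≤ tIdx c θ.ord β' (dδ k₁) :=
      aux_key hc hclosed hβ'κ hδ₁Sta h0δ₁ hδ₁β' hstairsup
    have hδ₁M : dδ k₁ ≤ Mk k₂ := by
      have h1 := (htopM k₁ k₂ hlt hk₂κ).2
      exact le_trans (hdtop k₁ hk₁κ) (le_trans (le_of_lt (lt_add_one _)) h1)
    have hMβ' : Mk k₂ < β' := lt_of_lt_of_le (hMlt k₂ hk₂κ) hβ'δ₂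
    have hmon : tIdx c θ.ord β' (dδ k₁) ≤ tIdx c θ.ord β' (Mk k₂) :=
      tIdx_mono hc hδ₁M hMβ' hβ'κ
    have hTle : tIdx c θ.ord β' (Mk k₂) ≤ T k₂ := by
      refine aux_le_sSup (o := θ.ord) ?_ ⟨β', ⟨hβ'b, hβ'δ₂⟩, rfl⟩
      rintro y ⟨β'', hβ'', rfl⟩
      have hβ''κ : β'' < κ.ord := hbb _ hδ₂κ hβ''.1
      have hMkβ'' : Mk k₂ < β'' := lt_of_lt_of_le (hMlt k₂ hk₂κ) hβ''.2
      exact Set.mem_Iio.2 (tIdx_mem hc hMkβ'' hβ''κ).1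
    exact ⟨β', blockOf_mem_high hβ'b hβ'δ₂,
      le_trans hkey (le_trans hmon (le_trans hTle hk₂.2))⟩
  -- the family
  set A : Set (Set Ordinal.{0}) := (fun k => blockOf b (dδ k)) '' K with hAdef
  have hblocksep : ∀ j, j ∈ K → ∀ k, k ∈ K → j < k →
      ∀ x ∈ blockOf b (dδ j), ∀ y ∈ blockOf b (dδ k), x < y := by
    intro j hj k hk hjk x hx y hy
    have h1 : x ≤ topB b (dδ j) :=
      aux_le_sSup (blockOf_subset hκreg hχ'κc (hbb _ (hdκ j hj.1)) (hbc _ (hdκ j hj.1))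
        (hdκ j hj.1)) hx
    have h2 : dδ k ≤ y :=
      blockOf_min hκreg hχ'κc (hbb _ (hdκ k hk.1)) (hbc _ (hdκ k hk.1)) (hdκ k hk.1) y hy
    exact lt_of_le_of_lt h1 (lt_of_lt_of_le (hmono j k hjk hk.1) h2)
  have hA1 : ∀ a ∈ A, a ⊆ Iio κ.ord ∧ MkEq a (1 + χ') := by
    rintro a ⟨k, hk, rfl⟩
    exact ⟨blockOf_subset hκreg hχ'κc (hbb _ (hdκ k hk.1)) (hbc _ (hdκ k hk.1)) (hdκ k hk.1),
      blockOf_card hκreg hχ'κc (hbb _ (hdκ k hk.1)) (hbc _ (hdκ k hk.1)) (hdκ k hk.1)⟩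
  have hinj : Set.InjOn (fun k => blockOf b (dδ k)) K := by
    intro j hj k hk heq
    by_contra hne
    have heq' : blockOf b (dδ j) = blockOf b (dδ k) := heq
    rcases lt_or_gt_of_ne hne with h | h
    · have hmem : dδ k ∈ blockOf b (dδ j) := by rw [heq']; exact blockOf_mem_self
      exact lt_irrefl _ (hblocksep j hj k hk h (dδ k) hmem (dδ k) blockOf_mem_self)
    · have hmem : dδ j ∈ blockOf b (dδ k) := by rw [← heq']; exact blockOf_mem_self
      exact lt_irrefl _ (hblocksep k hk j hj h (dδ j) hmem (dδ j) blockOf_mem_self)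
  have hA2 : MkEq A κ := by
    rw [MkEq, hAdef, Cardinal.mk_image_eq_of_injOn _ _ hinj]
    exact aux_mk_unbounded hκreg hKsub hKunb
  have hA3 : A.Pairwise Disjoint := by
    rintro a ⟨j, hj, rfl⟩ a' ⟨k, hk, rfl⟩ hne
    have hjk : j ≠ k := fun h => hne (by rw [h])
    rw [Set.disjoint_left]
    intro x hxj hxk
    rcases lt_or_gt_of_ne hjk with h | h
    · exact lt_irrefl x (hblocksep j hj k hk h x hxj x hxk)
    · exact lt_irrefl x (hblocksep k hk j hj h x hxk x hxj)
  have h1χ : 1 + χ' < χ := by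
    rcases lt_or_ge χ' Cardinal.aleph0 with h | h
    · exact lt_of_lt_of_le (Cardinal.add_lt_aleph0 Cardinal.one_lt_aleph0 h) hχ
    · rw [Cardinal.add_eq_right h (le_trans Cardinal.one_le_aleph0 h)]
      exact hcon
  obtain ⟨B, hBA, hB2, hBlarge⟩ := hwit (1 + χ') h1χ A hA1 hA2 hA3 i₀ hi₀θ
  -- extract two distinct members
  have h2B : (2 : Cardinal.{1}) ≤ Cardinal.mk B := by
    rw [MkEq] at hB2
    rw [hB2, Cardinal.lift_ofNat]
  obtain ⟨x, y, hxy⟩ := Cardinal.two_le_iff.1 h2B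
  obtain ⟨k₁, hk₁, hxk₁⟩ := hBA x.2
  obtain ⟨k₂, hk₂, hyk₂⟩ := hBA y.2
  have hfinal : ∀ j, j ∈ K → ∀ k, k ∈ K → j < k →
      blockOf b (dδ j) ∈ B → blockOf b (dδ k) ∈ B → False := by
    intro j hj k hk hjk hjB hkB
    obtain ⟨β', hβ'blk, hsmall⟩ := hcross j hj k hk hjk
    have hlarge := hBlarge _ hjB _ hkB (hblocksep j hj k hk hjk) (dδ j)
      blockOf_mem_self β' hβ'blk
    exact absurd hsmall (not_le.2 hlarge)
  have hk₁k₂ : k₁ ≠ k₂ := by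
    rintro rfl
    have hxk₁' : blockOf b (dδ k₁) = (x : Set Ordinal.{0}) := hxk₁
    have hyk₂' : blockOf b (dδ k₁) = (y : Set Ordinal.{0}) := hyk₂
    exact hxy (Subtype.ext (hxk₁'.symm.trans hyk₂'))
  have hxk₁' : blockOf b (dδ k₁) = (x : Set Ordinal.{0}) := hxk₁
  have hyk₂' : blockOf b (dδ k₂) = (y : Set Ordinal.{0}) := hyk₂
  have hxB : blockOf b (dδ k₁) ∈ B := by rw [hxk₁']; exact x.2
  have hyB : blockOf b (dδ k₂) ∈ B := by rw [hyk₂']; exact y.2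
  rcases lt_or_gt_of_ne hk₁k₂ with h | h
  · exact hfinal k₁ hk₁ k₂ hk₂ h hxB hyB
  · exact hfinal k₂ hk₂ k₁ hk₁ h hyB hxB

end CSeq
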